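/- If G is the edgeless graph on n vertices (n ≥ 1), then χ_md(G) = ⌈n/2⌉. -/
import Mathlib


open SimpleGraph

/-- A majority dominator coloring: a proper coloring such that every vertex `v`
dominates at least half of some (nonempty) color class, i.e. there is a color class `C`
with `|C| ≤ 2 * |C ∩ N[v]|`. -/
def SimpleGraph.IsMajorityDominatorColoring {V : Type*} (G : SimpleGraph V) {k : ℕ}
    (c : V → Fin k) : Prop :=
  (∀ u v, G.Adj u v → c u ≠ c v) ∧
  ∀ v : V, ∃ i : Fin k,
    {u | c u = i}.Nonempty ∧
    {u | c u = i}.ncard ≤ 2 * {u | c u = i ∧ (u = v ∨ G.Adj v u)}.ncard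

/-- The majority dominator chromatic number. -/
noncomputable def SimpleGraph.majorityDominatorChromaticNumber {V : Type*}
    (G : SimpleGraph V) : ℕ :=
  sInf {k | ∃ c : V → Fin k, G.IsMajorityDominatorColoring c}

theorem md_of_edgeless {V : Type*} [Fintype V] (G : SimpleGraph V)
    (hn : 1 ≤ Fintype.card V) (hG : G = ⊥) :
    G.majorityDominatorChromaticNumber = (Fintype.card V + 1) / 2 := by
  classical
  subst hG
  set n := Fintype.card V with hncard
  set S : Set ℕ := {k | ∃ c : V → Fin k, (⊥ : SimpleGraph V).IsMajorityDominatorColoring c}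
    with hS
  -- membership: construct a coloring with (n+1)/2 colors
  obtain ⟨e⟩ : Nonempty (V ≃ Fin n) := ⟨Fintype.equivFin V⟩
  have hmem : (n + 1) / 2 ∈ S := by
    have hlt : ∀ v : V, (e v : ℕ) / 2 < (n + 1) / 2 := by
      intro v
      have := (e v).isLt
      omega
    refine ⟨fun v => ⟨(e v : ℕ) / 2, hlt v⟩, fun u v h => absurd h (by simp), ?_⟩
    intro v
    set c : V → Fin ((n + 1) / 2) := fun v => ⟨(e v : ℕ) / 2, hlt v⟩ with hc
    refine ⟨c v, ⟨v, rfl⟩, ?_⟩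
    have h1 : {u | c u = c v ∧ (u = v ∨ (⊥ : SimpleGraph V).Adj v u)} = {v} := by
      ext u
      simp only [Set.mem_setOf_eq, Set.mem_singleton_iff, SimpleGraph.bot_adj, or_false]
      exact ⟨fun h => h.2, fun h => ⟨by rw [h], h⟩⟩
    rw [h1, Set.ncard_singleton]
    have h2 : {u | c u = c v}.ncard ≤ (Set.univ : Set (Fin 2)).ncard := by
      apply Set.ncard_le_ncard_of_injOn (fun u => (⟨(e u : ℕ) % 2, by omega⟩ : Fin 2))
      · intro a _; trivial
      · intro a ha b hb hab
        simp only [Set.mem_setOf_eq, hc, Fin.mk.injEq] at ha hb hab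
        have : (e a : ℕ) = (e b : ℕ) := by omega
        exact e.injective (Fin.ext this)
    simpa [Set.ncard_univ] using h2
  -- lower bound: any k ∈ S satisfies (n+1)/2 ≤ k
  have hlb : ∀ k ∈ S, (n + 1) / 2 ≤ k := by
    intro k hk
    obtain ⟨c, _, hdom⟩ := hk
    -- every fiber of c has at most 2 elements
    have hfib : ∀ v : V, {u | c u = c v}.ncard ≤ 2 := by
      intro v
      obtain ⟨i, hne, hle⟩ := hdom v
      by_cases hv : c v = i
      · subst hv
        have h1 : {u | c u = c v ∧ (u = v ∨ (⊥ : SimpleGraph V).Adj v u)} = {v} := by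
          ext u
          simp only [Set.mem_setOf_eq, Set.mem_singleton_iff, SimpleGraph.bot_adj, or_false]
          exact ⟨fun h => h.2, fun h => ⟨by rw [h], h⟩⟩
        rwa [h1, Set.ncard_singleton, mul_one] at hle
      · exfalso
        have h1 : {u | c u = i ∧ (u = v ∨ (⊥ : SimpleGraph V).Adj v u)} = ∅ := by
          ext u; simp; rintro h rfl; exact hv h
        rw [h1, Set.ncard_empty, mul_zero, Nat.le_zero] at hle
        have hpos := (Set.ncard_pos (s := {u | c u = i}) (Set.toFinite _)).mpr hne
        omega
    have hsum : n = ∑ i : Fin k, (Finset.univ.filter fun u => c u = i).card := by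
      rw [hncard, ← Finset.card_univ]
      exact Finset.card_eq_sum_card_fiberwise (fun x _ => Finset.mem_univ (c x))
    have hbound : ∀ i : Fin k, (Finset.univ.filter fun u => c u = i).card ≤ 2 := by
      intro i
      by_cases h : ∃ v, c v = i
      · obtain ⟨v, rfl⟩ := h
        have := hfib v
        rwa [Set.ncard_eq_toFinset_card', Set.toFinset_setOf] at this
      · push_neg at h
        have : (Finset.univ.filter fun u => c u = i) = ∅ := by
          apply Finset.filter_eq_empty_iff.mpr
          intro u _; exact h u
        simp [this]
    have : n ≤ 2 * k := by
      calc n = ∑ i : Fin k, (Finset.univ.filter fun u => c u = i).card := hsum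
        _ ≤ ∑ _i : Fin k, 2 := Finset.sum_le_sum fun i _ => hbound i
        _ = 2 * k := by simp [mul_comm]
    omega
  show sInf S = (n + 1) / 2
  have h1 : sInf S ≤ (n + 1) / 2 := Nat.sInf_le hmem
  have h2 : (n + 1) / 2 ≤ sInf S := hlb _ (Nat.sInf_mem ⟨_, hmem⟩)
  exact le_antisymm h1 h2
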